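/- Let q = 2k-1 = p^α with p odd prime and q ≡ 1 (mod 4), k ≥ 3. Let ω₀ be a unit complex number with Re(ω₀²) = (2-k)/(k-1). Then the matrix C(ω₀) with zero diagonal and off-diagonal entries ω₀^(χ(a-b)) satisfies C·C* = (2k-2)·I; that is, C(ω₀) is a complex symmetric conference matrix of odd order 2k-1. -/

import Mathlib

open Matrix Finset

private lemma aux_zpow_pm (ω : ℂ) {n : ℤ} (hn : n = 1 ∨ n = -1) :
    ω ^ n = (ω + ω⁻¹) / 2 + (n : ℂ) * ((ω - ω⁻¹) / 2) := by
  rcases hn with h | h <;> subst h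
  · push_cast; rw [zpow_one]; ring
  · push_cast
    rw [_root_.zpow_neg_one]; ring

private lemma aux_sum_shift {F : Type*} [Field F] [Fintype F] [DecidableEq F]
    (hF : ringChar F ≠ 2) {d : F} (hd : d ≠ 0) :
    ∑ x : F, quadraticChar F x * quadraticChar F (x - d) = -1 := by
  classical
  have h0 : ∑ x ∈ Finset.univ.erase (0 : F),
      quadraticChar F x * quadraticChar F (x - d)
      = ∑ x : F, quadraticChar F x * quadraticChar F (x - d) := by
    rw [← Finset.sum_erase_add Finset.univ _ (Finset.mem_univ (0 : F))]
    simp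
  rw [← h0]
  have h1 : ∑ x ∈ Finset.univ.erase (0 : F),
      quadraticChar F x * quadraticChar F (x - d)
      = ∑ u ∈ Finset.univ.erase (1 : F), quadraticChar F u := by
    refine Finset.sum_nbij' (fun x => 1 - d * x⁻¹) (fun u => d * (1 - u)⁻¹)
      ?_ ?_ ?_ ?_ ?_
    · intro x hx
      have hx0 : x ≠ 0 := (Finset.mem_erase.mp hx).1
      refine Finset.mem_erase.mpr ⟨?_, Finset.mem_univ _⟩
      intro h
      have : d * x⁻¹ = 0 := by linear_combination -h
      exact hd (by simpa [hx0] using this)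
    · intro u hu
      have hu1 : u ≠ 1 := (Finset.mem_erase.mp hu).1
      refine Finset.mem_erase.mpr ⟨?_, Finset.mem_univ _⟩
      have h1u : (1 : F) - u ≠ 0 := sub_ne_zero.mpr (Ne.symm hu1)
      exact mul_ne_zero hd (inv_ne_zero h1u)
    · intro x hx
      have hx0 : x ≠ 0 := (Finset.mem_erase.mp hx).1
      field_simp
      rw [sub_sub_cancel, div_self hd]
    · intro u hu
      have hu1 : u ≠ 1 := (Finset.mem_erase.mp hu).1
      have h1u : (1 : F) - u ≠ 0 := sub_ne_zero.mpr (Ne.symm hu1)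
      field_simp
      ring
    · intro x hx
      have hx0 : x ≠ 0 := (Finset.mem_erase.mp hx).1
      have hxd : x - d = x * (1 - d * x⁻¹) := by field_simp
      rw [hxd, _root_.map_mul, ← mul_assoc, ← sq, quadraticChar_sq_one hx0, one_mul]
  rw [h1]
  have h2 := Finset.sum_erase_add Finset.univ
    (fun u => quadraticChar F u) (Finset.mem_univ (1 : F))
  rw [quadraticChar_sum_zero hF] at h2
  simp only [MulChar.map_one] at h2
  omega

/-- For `q = 2k-1 ≡ 1 (mod 4)` an odd prime power, `k ≥ 3`, and `ω₀` a unit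
complex number with `Re(ω₀²) = (2-k)/(k-1)`, the matrix `C(ω₀)` with zero diagonal and
entries `ω₀^(χ(a-b))` satisfies `C·C* = (2k-2)·I`: it is a complex symmetric conference
matrix of odd order `2k-1`. -/
theorem conference_matrix (F : Type*) [Field F] [Fintype F] [DecidableEq F]
    (p : ℕ) (α : ℕ) (hp : p.Prime) (hodd : p ≠ 2)
    (hcard : Fintype.card F = p ^ α) (hmod : Fintype.card F % 4 = 1)
    (k : ℕ) (hk : Fintype.card F = 2 * k - 1) (hk3 : 3 ≤ k)
    (ω₀ : ℂ) (hω : ‖ω₀‖ = 1)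
    (hre : (ω₀ ^ 2).re = (2 - (k : ℝ)) / ((k : ℝ) - 1))
    (C : Matrix F F ℂ)
    (hC : C = Matrix.of fun a b : F =>
      if a = b then 0 else ω₀ ^ ((quadraticChar F (a - b) : ℤ))) :
    C * Cᴴ = (2 * (k : ℂ) - 2) • 1 := by
  classical
  have hchar : ringChar F ≠ 2 := by
    intro h
    have := FiniteField.even_card_iff_char_two.mp h
    omega
  have hω0 : ω₀ ≠ 0 := by
    intro h; rw [h] at hω; simp at hω
  have hconj : (starRingEnd ℂ) ω₀ = ω₀⁻¹ := (Complex.inv_eq_conj hω).symm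
  set A : ℂ := (ω₀ + ω₀⁻¹) / 2 with hA
  set B : ℂ := (ω₀ - ω₀⁻¹) / 2 with hB
  have hkR : ((k : ℝ) - 1) ≠ 0 := by
    have h3 : (3 : ℝ) ≤ (k : ℝ) := by exact_mod_cast hk3
    intro h; linarith
  have hkC : ((k : ℂ) - 1) ≠ 0 := by
    have := Complex.ofReal_ne_zero.mpr hkR
    push_cast at this; exact this
  have hqC : (Fintype.card F : ℂ) = 2 * (k : ℂ) - 1 := by
    rw [hk, Nat.cast_sub (by omega : 1 ≤ 2 * k)]
    push_cast; ring
  have hωinv : ω₀ * ω₀⁻¹ = 1 := mul_inv_cancel₀ hω0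
  have hsum2 : ω₀ ^ 2 + (ω₀⁻¹) ^ 2 = 2 * (((2 - (k : ℝ)) / ((k : ℝ) - 1) : ℝ) : ℂ) := by
    have h1 : (ω₀⁻¹) ^ 2 = (starRingEnd ℂ) (ω₀ ^ 2) := by rw [map_pow, hconj]
    rw [h1, Complex.add_conj, hre]
    push_cast
    ring
  have hmain : (2 * (k : ℂ) - 1 - 2) * A ^ 2 + B ^ 2 = 0 := by
    have hA2 : A ^ 2 = (ω₀ ^ 2 + (ω₀⁻¹) ^ 2 + 2 * (ω₀ * ω₀⁻¹)) / 4 := by rw [hA]; ring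
    have hB2 : B ^ 2 = (ω₀ ^ 2 + (ω₀⁻¹) ^ 2 - 2 * (ω₀ * ω₀⁻¹)) / 4 := by rw [hB]; ring
    rw [hA2, hB2, hωinv, hsum2]
    push_cast
    field_simp
    ring
  subst hC
  ext a b
  rw [Matrix.mul_apply]
  simp only [Matrix.conjTranspose_apply, Matrix.of_apply, RCLike.star_def]
  by_cases hab : a = b
  · subst hab
    rw [Matrix.smul_apply, Matrix.one_apply_eq, smul_eq_mul, mul_one]
    have hterm : ∀ c : F,
        (if a = c then (0 : ℂ) else ω₀ ^ ((quadraticChar F (a - c) : ℤ))) *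
          (starRingEnd ℂ) (if a = c then 0 else ω₀ ^ ((quadraticChar F (a - c) : ℤ)))
        = 1 - (if a = c then (1 : ℂ) else 0) := by
      intro c
      by_cases h : a = c
      · simp [h]
      · rw [if_neg h, map_zpow₀, hconj, ← mul_zpow, hωinv, _root_.one_zpow, if_neg h]
        ring
    rw [Finset.sum_congr rfl (fun c _ => hterm c), Finset.sum_sub_distrib,
      Finset.sum_const, Finset.sum_ite_eq, if_pos (Finset.mem_univ a),
      Finset.card_univ, nsmul_eq_mul, mul_one, hqC]
    ring
  · rw [Matrix.smul_apply, Matrix.one_apply_ne hab, smul_zero]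
    have hd0 : a - b ≠ 0 := sub_ne_zero.mpr hab
    set s : Finset F := (Finset.univ.erase a).erase b with hs
    have hbmem : b ∈ Finset.univ.erase a :=
      Finset.mem_erase.mpr ⟨Ne.symm hab, Finset.mem_univ b⟩
    have hneg1 : quadraticChar F (-1) = 1 := by
      rw [quadraticChar_one_iff_isSquare (neg_ne_zero.mpr one_ne_zero),
        FiniteField.isSquare_neg_one_iff]
      omega
    have hba : quadraticChar F (b - a) = quadraticChar F (a - b) := by
      have h1 : b - a = -1 * (a - b) := by ring
      rw [h1, _root_.map_mul, hneg1, one_mul]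
    have hrestrict : ∑ c : F,
        (if a = c then (0 : ℂ) else ω₀ ^ ((quadraticChar F (a - c) : ℤ))) *
          (starRingEnd ℂ) (if b = c then 0 else ω₀ ^ ((quadraticChar F (b - c) : ℤ)))
        = ∑ c ∈ s,
        (if a = c then (0 : ℂ) else ω₀ ^ ((quadraticChar F (a - c) : ℤ))) *
          (starRingEnd ℂ) (if b = c then 0 else ω₀ ^ ((quadraticChar F (b - c) : ℤ))) := by
      refine (Finset.sum_subset (Finset.subset_univ s) ?_).symm
      intro x _ hxs
      have hx : x = b ∨ x = a := by
        by_contra hcon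
        push_neg at hcon
        exact hxs (Finset.mem_erase.mpr ⟨hcon.1,
          Finset.mem_erase.mpr ⟨hcon.2, Finset.mem_univ x⟩⟩)
      rcases hx with h | h <;> subst h <;> simp
    have hterm : ∀ c ∈ s,
        (if a = c then (0 : ℂ) else ω₀ ^ ((quadraticChar F (a - c) : ℤ))) *
          (starRingEnd ℂ) (if b = c then 0 else ω₀ ^ ((quadraticChar F (b - c) : ℤ)))
        = A ^ 2 + ((quadraticChar F (a - c) : ℤ) : ℂ) * (A * B)
          - ((quadraticChar F (b - c) : ℤ) : ℂ) * (A * B)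
          - ((quadraticChar F (a - c) * quadraticChar F (b - c) : ℤ) : ℂ) * B ^ 2 := by
      intro c hc
      have hcb : c ≠ b := (Finset.mem_erase.mp hc).1
      have hca : c ≠ a := (Finset.mem_erase.mp (Finset.mem_erase.mp hc).2).1
      have hn := quadraticChar_dichotomy (F := F) (a := a - c) (sub_ne_zero.mpr (Ne.symm hca))
      have hm := quadraticChar_dichotomy (F := F) (a := b - c) (sub_ne_zero.mpr (Ne.symm hcb))
      have e1 : ω₀ ^ ((quadraticChar F (a - c) : ℤ))
          = A + ((quadraticChar F (a - c) : ℤ) : ℂ) * B := by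
        rw [aux_zpow_pm ω₀ hn, hA, hB]
      have e2 : (starRingEnd ℂ) (ω₀ ^ ((quadraticChar F (b - c) : ℤ)))
          = A - ((quadraticChar F (b - c) : ℤ) : ℂ) * B := by
        rw [map_zpow₀, hconj, aux_zpow_pm ω₀⁻¹ hm, inv_inv, hA, hB]
        ring
      rw [if_neg (Ne.symm hca), if_neg (Ne.symm hcb), e1, e2]
      push_cast
      ring
    have hs1 : ∑ c ∈ s, quadraticChar F (a - c) = -(quadraticChar F (a - b)) := by
      have htot : ∑ c : F, quadraticChar F (a - c) = 0 := by
        rw [← quadraticChar_sum_zero hchar]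
        exact Fintype.sum_equiv (Equiv.subLeft a) _ _ (fun c => rfl)
      have e1 := Finset.sum_erase_add Finset.univ
        (fun c => quadraticChar F (a - c)) (Finset.mem_univ a)
      have e2 := Finset.sum_erase_add (Finset.univ.erase a)
        (fun c => quadraticChar F (a - c)) hbmem
      simp only [sub_self, quadraticChar_zero, add_zero] at e1 e2
      rw [htot] at e1
      rw [hs]
      omega
    have hs2 : ∑ c ∈ s, quadraticChar F (b - c) = -(quadraticChar F (a - b)) := by
      have htot : ∑ c : F, quadraticChar F (b - c) = 0 := by
        rw [← quadraticChar_sum_zero hchar]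
        exact Fintype.sum_equiv (Equiv.subLeft b) _ _ (fun c => rfl)
      have e1 := Finset.sum_erase_add Finset.univ
        (fun c => quadraticChar F (b - c)) (Finset.mem_univ a)
      have e2 := Finset.sum_erase_add (Finset.univ.erase a)
        (fun c => quadraticChar F (b - c)) hbmem
      simp only [sub_self, quadraticChar_zero, add_zero, hba] at e1 e2
      rw [htot] at e1
      rw [hs]
      omega
    have hs3 : ∑ c ∈ s, quadraticChar F (a - c) * quadraticChar F (b - c) = -1 := by
      have htot : ∑ c : F, quadraticChar F (a - c) * quadraticChar F (b - c) = -1 := by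
        have haux := aux_sum_shift hchar (d := b - a) (sub_ne_zero.mpr (Ne.symm hab))
        rw [← haux]
        refine Fintype.sum_equiv (Equiv.subLeft b) _ _ (fun c => ?_)
        rw [Equiv.subLeft_apply]
        have h1 : b - c - (b - a) = a - c := by ring
        rw [h1, mul_comm]
      have e1 := Finset.sum_erase_add Finset.univ
        (fun c => quadraticChar F (a - c) * quadraticChar F (b - c)) (Finset.mem_univ a)
      have e2 := Finset.sum_erase_add (Finset.univ.erase a)
        (fun c => quadraticChar F (a - c) * quadraticChar F (b - c)) hbmem
      simp only [sub_self, quadraticChar_zero, zero_mul, mul_zero, add_zero] at e1 e2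
      rw [htot] at e1
      rw [hs]
      omega
    rw [hrestrict, Finset.sum_congr rfl hterm]
    rw [Finset.sum_sub_distrib, Finset.sum_sub_distrib, Finset.sum_add_distrib,
      Finset.sum_const, ← Finset.sum_mul, ← Finset.sum_mul, ← Finset.sum_mul,
      ← Int.cast_sum, ← Int.cast_sum, ← Int.cast_sum, hs1, hs2, hs3]
    have hcards : s.card = Fintype.card F - 2 := by
      rw [hs, Finset.card_erase_of_mem hbmem,
        Finset.card_erase_of_mem (Finset.mem_univ a), Finset.card_univ]
      omega
    have hq2C : ((Fintype.card F - 2 : ℕ) : ℂ) = 2 * (k : ℂ) - 3 := by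
      have h1 : Fintype.card F - 2 = 2 * k - 3 := by omega
      rw [h1, Nat.cast_sub (by omega : 3 ≤ 2 * k)]
      push_cast; ring
    rw [hcards, nsmul_eq_mul, hq2C]
    push_cast
    linear_combination hmain
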